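/- Let r be a positive integer and let s_1, …, s_{r+1} and q_1, …, q_r be positive integers. Then there exist positive odd integers m_1, …, m_{r+1} such that for every i with 1 ≤ i ≤ r, the equation 3^{s_i} · m_i − 1 = 2^{q_i} · (2^{s_{i+1}} · m_{i+1} − 1) holds. -/

import Mathlib

/-- Auxiliary lemma: a strengthened version with the equations written without
natural subtraction, plus a prescribed residue of `m 0` modulo any power of 3. -/
lemma chain_aux (r : ℕ) : ∀ (s q : ℕ → ℕ), (∀ i ≤ r, 1 ≤ s i) → (∀ i < r, 1 ≤ q i) →
    ∀ e a : ℕ, ∃ m : ℕ → ℕ, (∀ i ≤ r, 0 < m i ∧ ¬ 2 ∣ m i) ∧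
      (∀ i < r, 3 ^ s i * m i + 2 ^ q i = 2 ^ (q i + s (i + 1)) * m (i + 1) + 1) ∧
      m 0 ≡ a [MOD 3 ^ e] := by
  induction r with
  | zero =>
    intro s q hs hq e a
    set b := a % 3 ^ e with hb
    refine ⟨fun _ => b + 3 ^ e * (1 + b % 2), ?_, ?_, ?_⟩
    · intro i _
      have h3 : 3 ^ e % 2 = 1 := by
        simp [Nat.pow_mod]
      have hpos : 0 < 3 ^ e := pow_pos (by norm_num) e
      show 0 < b + 3 ^ e * (1 + b % 2) ∧ ¬ 2 ∣ (b + 3 ^ e * (1 + b % 2))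
      rcases Nat.mod_two_eq_zero_or_one b with h | h <;> rw [h] <;>
        constructor <;> omega
    · intro i hi; omega
    · show (b + 3 ^ e * (1 + b % 2)) % 3 ^ e = a % 3 ^ e
      rw [Nat.add_mul_mod_self_left, hb, Nat.mod_mod_of_dvd _ dvd_rfl]
  | succ r ih =>
    intro s q hs hq e a
    -- shifted sequences
    set N := 3 ^ (s 0 + e) with hN
    have hNpos : 0 < N := pow_pos (by norm_num) _
    haveI : NeZero N := ⟨hNpos.ne'⟩
    have hcop : Nat.Coprime 2 N := Nat.Coprime.pow_right _ (by norm_num)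
    have hu : IsUnit ((2 : ZMod N) ^ (q 0 + s 1)) := by
      refine IsUnit.pow _ ?_
      have := (ZMod.isUnit_iff_coprime 2 N).mpr hcop
      simpa using this
    set cz : ZMod N := ((2 : ZMod N) ^ (q 0 + s 1))⁻¹ * ((2 : ZMod N) ^ q 0 + 3 ^ s 0 * (a : ZMod N) - 1) with hcz
    obtain ⟨m', hm'pos, hm'eq, hm'0⟩ := ih (fun i => s (i + 1)) (fun i => q (i + 1))
      (fun i hi => hs (i + 1) (by omega)) (fun i hi => hq (i + 1) (by omega)) (s 0 + e) cz.val
    -- key quantities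
    set D := 2 ^ (q 0 + s 1) * m' 0 + 1 with hD
    set E := 2 ^ q 0 + 3 ^ s 0 * a with hE
    clear_value D E
    have hm'0pos : 0 < m' 0 := (hm'pos 0 (by omega)).1
    have hq0 : 1 ≤ q 0 := hq 0 (by omega)
    have hs0 : 1 ≤ s 0 := hs 0 (by omega)
    have hle : 2 ^ q 0 ≤ 2 ^ (q 0 + s 1) := Nat.pow_le_pow_right (by norm_num) (by omega)
    have hle' : 2 ^ q 0 < D := by
      have : 2 ^ (q 0 + s 1) ≤ 2 ^ (q 0 + s 1) * m' 0 := Nat.le_mul_of_pos_right _ hm'0pos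
      omega
    -- the congruence D ≡ E [MOD N]
    have hmodZ : (D : ZMod N) = (E : ZMod N) := by
      have h1 : ((m' 0 : ℕ) : ZMod N) = cz := by
        have := (ZMod.natCast_eq_natCast_iff _ _ _).mpr hm'0
        rwa [ZMod.natCast_val, ZMod.cast_id] at this
      have h2 : (2 : ZMod N) ^ (q 0 + s 1) * cz = (2 : ZMod N) ^ q 0 + 3 ^ s 0 * (a : ZMod N) - 1 := by
        rw [hcz, ← mul_assoc, ZMod.mul_inv_of_unit _ hu, one_mul]
      push_cast [hD, hE]
      rw [h1, h2]
      ring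
    have hmod : D ≡ E [MOD N] := (ZMod.natCast_eq_natCast_iff _ _ _).mp hmodZ
    -- divisibility by 3 ^ s 0
    have hmods : D ≡ E [MOD 3 ^ s 0] := hmod.of_dvd (pow_dvd_pow 3 (by omega))
    have hE2 : E ≡ 2 ^ q 0 [MOD 3 ^ s 0] := by
      rw [hE]
      show (2 ^ q 0 + 3 ^ s 0 * a) % 3 ^ s 0 = 2 ^ q 0 % 3 ^ s 0
      rw [Nat.add_mul_mod_self_left]
    have hdvd : 3 ^ s 0 ∣ D - 2 ^ q 0 :=
      (Nat.modEq_iff_dvd' hle'.le).mp (hmods.trans hE2).symm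
    set m0 := (D - 2 ^ q 0) / 3 ^ s 0 with hm0
    have hm0eq : 3 ^ s 0 * m0 = D - 2 ^ q 0 := Nat.mul_div_cancel' hdvd
    -- m0 is odd and positive
    have hDodd : D % 2 = 1 := by
      have h2 : 2 ∣ 2 ^ (q 0 + s 1) * m' 0 := (dvd_pow_self 2 (by omega : q 0 + s 1 ≠ 0)).mul_right _
      omega
    have hq0e : 2 ∣ 2 ^ q 0 := dvd_pow_self 2 (by omega)
    obtain ⟨P, hP⟩ := hq0e
    have hle2 : 2 * P < D := by rw [← hP]; exact hle'
    have hm0odd : ¬ 2 ∣ m0 := by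
      intro h
      have h2 : 2 ∣ D - 2 ^ q 0 := hm0eq ▸ Dvd.dvd.mul_left h (3 ^ s 0)
      rw [hP] at h2
      omega
    have hm0pos : 0 < m0 := by
      rcases Nat.eq_zero_or_pos m0 with h | h
      · exfalso; rw [h, Nat.mul_zero, hP] at hm0eq; omega
      · exact h
    -- m0 ≡ a [MOD 3 ^ e]
    have hcong : m0 ≡ a [MOD 3 ^ e] := by
      have h1 : 3 ^ s 0 * m0 + 2 ^ q 0 ≡ 3 ^ s 0 * a + 2 ^ q 0 [MOD N] := by
        have hDE : 3 ^ s 0 * m0 + 2 ^ q 0 = D := by rw [hm0eq, hP]; omega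
        rw [hDE]
        have : 3 ^ s 0 * a + 2 ^ q 0 = E := by rw [hE]; ring
        rw [this]
        exact hmod
      have h2 : 3 ^ s 0 * m0 ≡ 3 ^ s 0 * a [MOD 3 ^ s 0 * 3 ^ e] := by
        have := h1.add_right_cancel' (2 ^ q 0)
        rwa [hN, pow_add] at this
      exact Nat.ModEq.mul_left_cancel' (by positivity) h2
    -- assemble
    refine ⟨fun i => match i with | 0 => m0 | (j + 1) => m' j, ?_, ?_, hcong⟩
    · rintro (_ | j) hi
      · exact ⟨hm0pos, hm0odd⟩
      · exact hm'pos j (by omega)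
    · rintro (_ | j) hi
      · show 3 ^ s 0 * m0 + 2 ^ q 0 = 2 ^ (q 0 + s 1) * m' 0 + 1
        rw [hm0eq, hP, hD]
        omega
      · exact hm'eq j (by omega)

theorem chain_equations_solvable (r : ℕ) (hr : 1 ≤ r) (s q : ℕ → ℕ)
    (hs : ∀ i ≤ r, 1 ≤ s i) (hq : ∀ i < r, 1 ≤ q i) :
    ∃ m : ℕ → ℕ, (∀ i ≤ r, 0 < m i ∧ ¬ 2 ∣ m i) ∧
      ∀ i < r, 3 ^ s i * m i - 1 = 2 ^ q i * (2 ^ s (i + 1) * m (i + 1) - 1) := by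
  obtain ⟨m, hmpos, hmeq, -⟩ := chain_aux r s q hs hq 0 0
  refine ⟨m, hmpos, fun i hi => ?_⟩
  have key := hmeq i hi
  have hA : 1 ≤ 3 ^ s i * m i :=
    Nat.one_le_iff_ne_zero.mpr (Nat.mul_ne_zero (by positivity) (hmpos i hi.le).1.ne')
  rw [Nat.mul_sub, mul_one, ← mul_assoc, ← pow_add]
  omega
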